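/- arXiv:0911.2077 — 2 statements merged into one kernel-verified Lean document; each statement's English description precedes it below -/
import Mathlib

section
/- For odd n and 0 ≤ p < 1/2, P[B(p,n) ≥ n/2] = (1/2 − p) · Σ_{j ≥ (n+1)/2} C(2j,j) (p(1−p))^j, where the series converges. -/
open Real

noncomputable def binomTail (n k : ℕ) (p : ℝ) : ℝ :=
  ∑ h ∈ Finset.Icc k n, (n.choose h : ℝ) * p ^ h * (1 - p) ^ (n - h)

lemma binomTail_split (n k : ℕ) (p : ℝ) :
    binomTail n k p = (n.choose k : ℝ) * p ^ k * (1 - p) ^ (n - k) + binomTail n (k + 1) p := by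
  rcases le_or_gt k n with h | h
  · rw [binomTail, binomTail,
      show Finset.Icc k n = insert k (Finset.Icc (k+1) n) by
        rw [Finset.Icc_add_one_left_eq_Ioc, Finset.Ioc_insert_left h],
      Finset.sum_insert (by simp)]
  · rw [binomTail, binomTail, Finset.Icc_eq_empty (by omega), Finset.Icc_eq_empty (by omega),
      Nat.choose_eq_zero_of_lt h]
    simp

lemma binomTail_step (p : ℝ) : ∀ d k, binomTail (k + d + 1) (k + 1) p
    = binomTail (k + d) (k + 1) p + ((k + d).choose k : ℝ) * p ^ (k + 1) * (1 - p) ^ d := by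
  intro d
  induction d with
  | zero =>
    intro k
    simp [binomTail, Finset.Icc_self, Finset.Icc_eq_empty (by omega : ¬ (k+1) ≤ k)]
  | succ d ih =>
    intro k
    rw [show k + (d+1) + 1 = k + d + 2 by omega, show k + (d+1) = k + d + 1 by omega]
    have hs1 := binomTail_split (k + d + 2) (k + 1) p
    have hs2 := binomTail_split (k + d + 1) (k + 1) p
    rw [show k + d + 2 - (k + 1) = d + 1 by omega] at hs1
    rw [show k + d + 1 - (k + 1) = d by omega] at hs2
    have hih := ih (k + 1)
    rw [show k + 1 + d + 1 = k + d + 2 by omega, show k + 1 + d = k + d + 1 by omega] at hih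
    have hpascal : ((k+d+2).choose (k+1) : ℝ)
        = ((k+d+1).choose k : ℝ) + ((k+d+1).choose (k+1) : ℝ) := by
      rw [show k+d+2 = (k+d+1)+1 by omega]
      exact_mod_cast congrArg (Nat.cast (R := ℝ)) (Nat.choose_succ_succ' (k+d+1) k)
    rw [hs1, hih, hs2]
    linear_combination (p ^ (k + 1) * (1 - p) ^ (d + 1)) * hpascal

lemma choose_le_two_pow' (n h : ℕ) : n.choose h ≤ 2 ^ n := by
  rcases le_or_gt h n with hh | hh
  · calc n.choose h ≤ ∑ m ∈ Finset.range (n+1), n.choose m :=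
        Finset.single_le_sum (fun i _ => Nat.zero_le _) (Finset.mem_range.mpr (by omega))
      _ = 2 ^ n := Nat.sum_range_choose n
  · simp [Nat.choose_eq_zero_of_lt hh]

lemma central_double (s : ℕ) : ((2*s+2).choose (s+1) : ℝ) = 2 * ((2*s+1).choose (s+1) : ℝ) := by
  have h : (2*s+1+1).choose (s+1) = (2*s+1).choose s + (2*s+1).choose (s+1) :=
    Nat.choose_succ_succ' (2*s+1) s
  rw [← Nat.choose_symm_half s] at h
  rw [show 2*s+2 = 2*s+1+1 by omega]
  push_cast [h]
  ring

lemma key_step (p : ℝ) (s : ℕ) :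
    binomTail (2*s+1) (s+1) p
      = binomTail (2*(s+1)+1) (s+1+1) p
        + (1/2 - p) * ((2*(s+1)).choose (s+1) : ℝ) * (p*(1-p))^(s+1) := by
  have h1 := binomTail_step p (s+1) (s+1)
  have h2 := binomTail_step p s (s+1)
  have h3 := binomTail_split (2*s+1) (s+1) p
  rw [show s+1+(s+1)+1 = 2*s+2+1 by omega, show s+1+(s+1) = 2*s+2 by omega] at h1
  rw [show s+1+s+1 = 2*s+2 by omega, show s+1+s = 2*s+1 by omega] at h2
  rw [show 2*s+1 - (s+1) = s by omega] at h3
  have hc := central_double s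
  rw [show 2*(s+1) = 2*s+2 by omega]
  rw [mul_pow, h3, h1, h2]
  linear_combination (-(1/2) * p^(s+1) * (1-p)^(s+1)) * hc

lemma binomTail_nonneg (n k : ℕ) {p : ℝ} (h0 : 0 ≤ p) (h1 : p ≤ 1) : 0 ≤ binomTail n k p :=
  Finset.sum_nonneg fun h _ =>
    mul_nonneg (mul_nonneg (Nat.cast_nonneg _) (pow_nonneg h0 _))
      (pow_nonneg (by linarith) _)

lemma G_le {p : ℝ} (h0 : 0 ≤ p) (hp : p < 1/2) (s : ℕ) :
    binomTail (2*s+1) (s+1) p ≤ ((s:ℝ)+1) * (2^(2*s+1) * (p*(1-p))^s) := by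
  have hq0 : (0:ℝ) ≤ 1 - p := by linarith
  have hterm : ∀ h ∈ Finset.Icc (s+1) (2*s+1),
      ((2*s+1).choose h : ℝ) * p^h * (1-p)^(2*s+1-h) ≤ 2^(2*s+1) * (p*(1-p))^s := by
    intro h hh
    simp only [Finset.mem_Icc] at hh
    have hc : ((2*s+1).choose h : ℝ) ≤ 2^(2*s+1) := by
      exact_mod_cast Nat.cast_le.mpr (choose_le_two_pow' (2*s+1) h)
    have hpq : p^h * (1-p)^(2*s+1-h) ≤ (p*(1-p))^s := by
      obtain ⟨d, hd⟩ : ∃ d, h = s+1+d := ⟨h - (s+1), by omega⟩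
      subst hd
      rw [show 2*s+1 - (s+1+d) = s - d by omega, mul_pow]
      have hp1 : p ≤ 1 := by linarith
      have hpd : p^d ≤ (1-p)^d := pow_le_pow_left₀ h0 (by linarith) d
      calc p^(s+1+d) * (1-p)^(s-d) = p^s * p * p^d * (1-p)^(s-d) := by ring
        _ ≤ p^s * 1 * (1-p)^d * (1-p)^(s-d) := by
            apply mul_le_mul_of_nonneg_right _ (pow_nonneg hq0 _)
            apply mul_le_mul (mul_le_mul_of_nonneg_left hp1 (pow_nonneg h0 _)) hpd
              (pow_nonneg h0 _) (by positivity)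
        _ = p^s * (1-p)^s := by
            rw [mul_one, mul_assoc, ← pow_add, show d + (s-d) = s by omega]
    calc ((2*s+1).choose h : ℝ) * p^h * (1-p)^(2*s+1-h)
        = ((2*s+1).choose h : ℝ) * (p^h * (1-p)^(2*s+1-h)) := by ring
      _ ≤ 2^(2*s+1) * (p*(1-p))^s := by
          apply mul_le_mul hc hpq (by positivity) (by positivity)
  have hcard := Finset.sum_le_card_nsmul (Finset.Icc (s+1) (2*s+1)) _
    (2^(2*s+1) * (p*(1-p))^s) hterm
  rw [Nat.card_Icc, show 2*s+1+1 - (s+1) = s+1 by omega, nsmul_eq_mul] at hcard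
  rw [binomTail]
  calc (∑ h ∈ Finset.Icc (s+1) (2*s+1), ((2*s+1).choose h : ℝ) * p^h * (1-p)^(2*s+1-h))
      ≤ ((s+1 : ℕ) : ℝ) * (2^(2*s+1) * (p*(1-p))^s) := hcard
    _ = ((s:ℝ)+1) * (2^(2*s+1) * (p*(1-p))^s) := by push_cast; ring

lemma G_tendsto {p : ℝ} (h0 : 0 ≤ p) (hp : p < 1/2) :
    Filter.Tendsto (fun s => binomTail (2*s+1) (s+1) p) Filter.atTop (nhds 0) := by
  have hq0 : (0:ℝ) ≤ 1 - p := by linarith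
  have hx0 : 0 ≤ p * (1-p) := mul_nonneg h0 hq0
  have hx1 : 4 * (p*(1-p)) < 1 := by nlinarith [sq_nonneg (1 - 2*p)]
  have hr : ‖4 * (p*(1-p))‖ < 1 := by
    rw [Real.norm_eq_abs, abs_of_nonneg (by positivity)]; exact hx1
  have hsum : Summable (fun s : ℕ => ((s:ℝ)+1) * (4*(p*(1-p)))^s) := by
    have h1 : Summable (fun s : ℕ => (s:ℝ)^1 * (4*(p*(1-p)))^s) :=
      summable_pow_mul_geometric_of_norm_lt_one 1 hr
    have h2 : Summable (fun s : ℕ => (4*(p*(1-p)))^s) :=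
      summable_geometric_of_norm_lt_one hr
    simpa [add_mul, pow_one] using h1.add h2
  have hb0 : Filter.Tendsto (fun s : ℕ => 2 * (((s:ℝ)+1) * (4*(p*(1-p)))^s))
      Filter.atTop (nhds 0) := by
    simpa using (hsum.tendsto_atTop_zero).const_mul 2
  apply squeeze_zero (fun s => binomTail_nonneg _ _ h0 (by linarith)) _ hb0
  intro s
  calc binomTail (2*s+1) (s+1) p ≤ ((s:ℝ)+1) * (2^(2*s+1) * (p*(1-p))^s) := G_le h0 hp s
    _ = 2 * (((s:ℝ)+1) * (4*(p*(1-p)))^s) := by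
        simp only [mul_pow]; rw [pow_add, pow_mul]
        ring

lemma sumCentral {p : ℝ} (h0 : 0 ≤ p) (hp : p < 1/2) (m : ℕ) :
    Summable (fun j : ℕ =>
      (((2 * (j + m)).choose (j + m) : ℕ) : ℝ) * (p * (1 - p)) ^ (j + m)) := by
  have hq0 : (0:ℝ) ≤ 1 - p := by linarith
  have hx0 : 0 ≤ p * (1-p) := mul_nonneg h0 hq0
  have hx1 : 4 * (p*(1-p)) < 1 := by nlinarith [sq_nonneg (1 - 2*p)]
  apply Summable.of_nonneg_of_le
    (fun j => mul_nonneg (Nat.cast_nonneg _) (pow_nonneg hx0 _))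
    (fun j => ?_)
    (summable_geometric_of_lt_one (by positivity) hx1)
  calc (((2 * (j + m)).choose (j + m) : ℕ) : ℝ) * (p * (1 - p)) ^ (j + m)
      ≤ (4:ℝ)^(j+m) * (p * (1 - p)) ^ (j + m) := by
        apply mul_le_mul_of_nonneg_right _ (pow_nonneg hx0 _)
        calc (((2 * (j + m)).choose (j + m) : ℕ) : ℝ) ≤ ((2^(2*(j+m)) : ℕ) : ℝ) := by
              exact_mod_cast choose_le_two_pow' (2*(j+m)) (j+m)
          _ = (4:ℝ)^(j+m) := by push_cast; rw [pow_mul]; norm_num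
    _ = (4 * (p*(1-p)))^(j+m) := by simp only [mul_pow]
    _ ≤ (4 * (p*(1-p)))^j :=
        pow_le_pow_of_le_one (by positivity) hx1.le (by omega)

lemma telesum {p : ℝ} (h0 : 0 ≤ p) (hp : p < 1/2) (t : ℕ) :
    HasSum (fun j : ℕ => (1/2 - p) *
        ((((2 * (j + (t+1))).choose (j + (t+1)) : ℕ) : ℝ) * (p * (1 - p)) ^ (j + (t+1))))
      (binomTail (2*t+1) (t+1) p) := by
  have hq0 : (0:ℝ) ≤ 1 - p := by linarith
  have hx0 : 0 ≤ p * (1-p) := mul_nonneg h0 hq0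
  have hnn : ∀ j : ℕ, 0 ≤ (1/2 - p) *
      ((((2 * (j + (t+1))).choose (j + (t+1)) : ℕ) : ℝ) * (p * (1 - p)) ^ (j + (t+1))) :=
    fun j => mul_nonneg (by linarith) (mul_nonneg (Nat.cast_nonneg _) (pow_nonneg hx0 _))
  rw [hasSum_iff_tendsto_nat_of_nonneg hnn]
  have hpart : ∀ N : ℕ, (∑ j ∈ Finset.range N, (1/2 - p) *
        ((((2 * (j + (t+1))).choose (j + (t+1)) : ℕ) : ℝ) * (p * (1 - p)) ^ (j + (t+1))))
      = binomTail (2*t+1) (t+1) p - binomTail (2*(N+t)+1) (N+t+1) p := by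
    intro N
    induction N with
    | zero => simp
    | succ N ih =>
      rw [Finset.sum_range_succ, ih]
      have hk := key_step p (N+t)
      rw [show N+(t+1) = N+t+1 by omega, show 2*(N+1+t)+1 = 2*(N+t+1)+1 by omega,
        show N+1+t+1 = N+t+1+1 by omega]
      linarith [hk]
  simp only [hpart]
  have hG : Filter.Tendsto (fun N : ℕ => binomTail (2*(N+t)+1) (N+t+1) p)
      Filter.atTop (nhds 0) :=
    (G_tendsto h0 hp).comp (Filter.tendsto_add_atTop_nat t)
  simpa using (tendsto_const_nhds (x := binomTail (2*t+1) (t+1) p)).sub hG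

theorem stmt2 (n : ℕ) (hn : Odd n) (p : ℝ) (hp0 : 0 ≤ p) (hp : p < 1 / 2) :
    Summable (fun j : ℕ =>
        (((2 * (j + (n + 1) / 2)).choose (j + (n + 1) / 2) : ℕ) : ℝ)
          * (p * (1 - p)) ^ (j + (n + 1) / 2)) ∧
    binomTail n ((n + 1) / 2) p
      = (1 / 2 - p) * ∑' j : ℕ,
          (((2 * (j + (n + 1) / 2)).choose (j + (n + 1) / 2) : ℕ) : ℝ)
            * (p * (1 - p)) ^ (j + (n + 1) / 2) := by
  obtain ⟨t, ht⟩ := hn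
  subst ht
  rw [show (2*t+1+1)/2 = t+1 by omega]
  refine ⟨sumCentral hp0 hp (t+1), ?_⟩
  have hhs := telesum hp0 hp t
  rw [← hhs.tsum_eq, tsum_mul_left]
end

section
/- For odd n and p ∈ (0, 1/2), P[B(p,n) ≥ n/2] ≥ (1−2p) e^{l(n+1)} (2σ)^{n−1} · (−ln(1 − 4σ²)) / √(2π(n+1)), where σ = √(p(1−p)) and l(n) = −(9n+1)/(3n(12n+1)). -/
open Real

noncomputable def l (x : ℝ) : ℝ := -(9 * x + 1) / (3 * x * (12 * x + 1))

section Aux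
open Filter Topology

noncomputable def qAux (j : ℕ) : ℝ :=
  (Nat.centralBinom j : ℝ) * Real.sqrt (π * j) * Real.exp (-(l (2*j))) / 4^j

lemma qAux_eq (j : ℕ) (hj : 1 ≤ j) :
    qAux j = Real.sqrt π * (Stirling.stirlingSeq (2*j) / (Stirling.stirlingSeq j)^2)
      * Real.exp (-(l (2*j))) := by
  have hj0 : (0:ℝ) < j := by exact_mod_cast hj
  have hcb : (Nat.centralBinom j : ℝ) = ((2*j).factorial : ℝ) / ((j.factorial : ℝ) * (j.factorial : ℝ)) := by
    rw [eq_div_iff (by positivity)]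
    have := Nat.choose_mul_factorial_mul_factorial (show j ≤ 2*j by omega)
    have h2 : 2*j - j = j := by omega
    rw [h2] at this
    unfold Nat.centralBinom
    rw [← mul_assoc]
    exact_mod_cast congrArg (Nat.cast : ℕ → ℝ) this
  unfold qAux Stirling.stirlingSeq
  rw [hcb]
  push_cast
  rw [show (2:ℝ) * (2 * (j:ℝ)) = 4 * j by ring,
    Real.sqrt_mul (by norm_num : (0:ℝ) ≤ 4),
    show (4:ℝ) = 2^2 by norm_num, Real.sqrt_sq (by norm_num : (0:ℝ) ≤ 2),
    show 2 * (j:ℝ) / Real.exp 1 = 2 * ((j:ℝ)/Real.exp 1) by ring, mul_pow,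
    Real.sqrt_mul pi_pos.le, Real.sqrt_mul (by norm_num : (0:ℝ) ≤ 2)]
  set E := Real.exp 1 with hE
  set T := Real.sqrt (j:ℝ) with hT
  have hsj2 : T^2 = (j:ℝ) := Real.sq_sqrt hj0.le
  have hT0 : 0 < T := Real.sqrt_pos.2 hj0
  rw [← hsj2]
  have hE0 : E ≠ 0 := (Real.exp_pos 1).ne'
  have hfac : ((j.factorial : ℝ)) ≠ 0 := by positivity
  have hP : ((T^2/E))^(j) ≠ 0 := by positivity
  have h2 : Real.sqrt 2 ≠ 0 := by positivity
  field_simp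
  ring_nf
  rw [Real.sq_sqrt (by norm_num : (0:ℝ) ≤ 2), show (4:ℝ)^j = 2^(j*2) by
    rw [mul_comm, pow_mul]; norm_num]
  ring

lemma l_bounds (x : ℝ) (hx : 1 ≤ x) : -(1/x) ≤ l (2*x) ∧ l (2*x) ≤ 0 := by
  have hx0 : 0 < x := by linarith
  constructor
  · rw [l, neg_div, neg_le_neg_iff, div_le_div_iff₀ (by positivity) hx0]
    nlinarith
  · rw [l, neg_div]
    have : 0 ≤ (9*(2*x)+1) / (3*(2*x)*(12*(2*x)+1)) := by positivity
    linarith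

lemma l_tendsto : Tendsto (fun j : ℕ => l (2*(j:ℝ))) atTop (𝓝 0) := by
  have h1 : Tendsto (fun j : ℕ => -(1/(j:ℝ))) atTop (𝓝 0) := by
    simpa using (tendsto_one_div_atTop_nhds_zero_nat (𝕜 := ℝ)).neg
  have h2 : Tendsto (fun _ : ℕ => (0:ℝ)) atTop (𝓝 0) := tendsto_const_nhds
  refine tendsto_of_tendsto_of_tendsto_of_le_of_le' h1 h2 ?_ ?_
  · filter_upwards [eventually_ge_atTop 1] with j hj
    exact (l_bounds j (by exact_mod_cast hj)).1
  · filter_upwards [eventually_ge_atTop 1] with j hj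
    exact (l_bounds j (by exact_mod_cast hj)).2

lemma qAux_tendsto : Tendsto qAux atTop (𝓝 1) := by
  have h2 : Tendsto (fun j : ℕ => 2*j) atTop atTop :=
    tendsto_atTop_mono (fun j => Nat.le_mul_of_pos_left j (by norm_num)) tendsto_id
  have hs2 : Tendsto (fun j : ℕ => Stirling.stirlingSeq (2*j)) atTop (𝓝 (Real.sqrt π)) :=
    Stirling.tendsto_stirlingSeq_sqrt_pi.comp h2
  have hs1 : Tendsto (fun j : ℕ => (Stirling.stirlingSeq j)^2) atTop (𝓝 ((Real.sqrt π)^2)) :=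
    Stirling.tendsto_stirlingSeq_sqrt_pi.pow 2
  have hexp : Tendsto (fun j : ℕ => Real.exp (-(l (2*(j:ℝ))))) atTop (𝓝 1) := by
    have hneg : Tendsto (fun j : ℕ => -(l (2*(j:ℝ)))) atTop (𝓝 0) := by
      simpa using l_tendsto.neg
    simpa [Function.comp_def] using (Real.continuous_exp.tendsto 0).comp hneg
  have hpi : (Real.sqrt π)^2 ≠ 0 := by positivity
  have hmain := ((hs2.div hs1 hpi).const_mul (Real.sqrt π)).mul hexp
  have hone : Real.sqrt π * (Real.sqrt π / (Real.sqrt π)^2) * 1 = 1 := by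
    have h : Real.sqrt π ≠ 0 := by positivity
    field_simp
  rw [hone] at hmain
  apply hmain.congr'
  filter_upwards [eventually_ge_atTop 1] with j hj
  exact (qAux_eq j hj).symm

lemma delta_ge (x : ℝ) (hx : 1 ≤ x) :
    l (2*x + 2) - l (2*x) ≥ 1 / (8*x*(x+1)) := by
  have hx0 : 0 < x := by linarith
  have key : l (2*x + 2) - l (2*x) - 1 / (8*x*(x+1))
      = (48*x + 25) / (24*x*(x+1)*(24*x+1)*(24*x+25)) := by
    unfold l
    field_simp
    ring
  nlinarith [div_pos (by linarith : (0:ℝ) < 48*x+25)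
    (by positivity : (0:ℝ) < 24*x*(x+1)*(24*x+1)*(24*x+25)), key]

lemma key_ineq (x : ℝ) (hx : 1 ≤ x) :
    (2*x+1) * Real.sqrt (x+1) * Real.exp (-(l (2*(x+1)))) ≤
      2*(x+1) * Real.sqrt x * Real.exp (-(l (2*x))) := by
  have hx0 : 0 < x := by linarith
  have hΔ : l (2*x + 2) - l (2*x) ≥ 1 / (8*x*(x+1)) := delta_ge x hx
  set u : ℝ := 1 / (8*x*(x+1)) with hu
  have hu8 : u * (8*x*(x+1)) = 1 := by
    rw [hu]; field_simp
  have hexp : 1 + u ≤ Real.exp (l (2*x+2) - l (2*x)) :=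
    le_trans (by linarith) (Real.add_one_le_exp _)
  set s := Real.sqrt x with hs
  set t := Real.sqrt (x+1) with ht
  have hs2 : s^2 = x := Real.sq_sqrt hx0.le
  have ht2 : t^2 = x+1 := Real.sq_sqrt (by linarith)
  have hs0 : 0 < s := Real.sqrt_pos.2 hx0
  have ht0 : 0 < t := Real.sqrt_pos.2 (by linarith)
  have hu0 : 0 < u := by positivity
  have hgeo : (2*x+1) * t ≤ 2*(x+1) * s * (1+u) := by
    have ha : 0 < (2*x+1) * t := by positivity
    have hb : 0 < 2*(x+1) * s * (1+u) := by positivity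
    have hsq : (2*(x+1) * s * (1+u))^2 - ((2*x+1) * t)^2 = 4*x*(x+1)^2*u^2 := by
      linear_combination (4*(x+1)^2*(1+u)^2) * hs2 - (2*x+1)^2 * ht2 + (x+1) * hu8
    have hle : ((2*x+1) * t)^2 ≤ (2*(x+1) * s * (1+u))^2 := by nlinarith [sq_nonneg u]
    nlinarith [add_pos ha hb]
  have h2x2 : 2*(x+1) = 2*x+2 := by ring
  calc (2*x+1) * t * Real.exp (-(l (2*(x+1))))
      = (2*x+1) * t * (Real.exp (-(l (2*x))) / Real.exp (l (2*x+2) - l (2*x))) := by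
        rw [h2x2, ← Real.exp_sub]; ring_nf
    _ ≤ (2*(x+1) * s * (1+u)) * (Real.exp (-(l (2*x))) / Real.exp (l (2*x+2) - l (2*x))) := by
        apply mul_le_mul_of_nonneg_right hgeo
        positivity
    _ ≤ 2*(x+1) * s * Real.exp (-(l (2*x))) := by
        rw [div_eq_mul_inv]
        have h1 : (1+u) * (Real.exp (l (2*x+2) - l (2*x)))⁻¹ ≤ 1 := by
          rw [← div_eq_mul_inv, div_le_one (Real.exp_pos _)]
          exact hexp
        nlinarith [Real.exp_pos (-(l (2*x))), mul_pos hs0 (Real.exp_pos (-(l (2*x)))),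
          mul_nonneg (mul_nonneg (by linarith : (0:ℝ) ≤ 2*(x+1)) hs0.le)
            (Real.exp_pos (-(l (2*x)))).le]

lemma qAux_succ_le (j : ℕ) (hj : 1 ≤ j) : qAux (j+1) ≤ qAux j := by
  have hx : (1:ℝ) ≤ (j:ℝ) := by exact_mod_cast hj
  set x := (j:ℝ) with hxdef
  have hx0 : (0:ℝ) < x := by linarith
  have hCpos : (0:ℝ) < (Nat.centralBinom j : ℝ) := by exact_mod_cast Nat.centralBinom_pos j
  have hCid : (x+1) * (Nat.centralBinom (j+1) : ℝ) = 2*(2*x+1) * (Nat.centralBinom j : ℝ) := by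
    have := Nat.succ_mul_centralBinom_succ j
    have h := congrArg (Nat.cast : ℕ → ℝ) this
    push_cast at h
    rw [hxdef]
    linarith [h]
  have hC' : (Nat.centralBinom (j+1) : ℝ) = 2*(2*x+1)*(Nat.centralBinom j:ℝ)/(x+1) := by
    rw [eq_div_iff (by linarith : x+1 ≠ 0)]
    linarith [hCid]
  set K := (Nat.centralBinom j : ℝ) * Real.sqrt π / ((x+1) * 2 * 4^j) with hK
  have hK0 : 0 ≤ K := by positivity
  have e1 : qAux (j+1) = K * ((2*x+1) * Real.sqrt (x+1) * Real.exp (-(l (2*(x+1))))) := by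
    unfold qAux
    rw [hC']
    push_cast
    rw [Real.sqrt_mul pi_pos.le, pow_succ, hK]
    have h1 : x + 1 ≠ 0 := by linarith
    have h4 : ((4:ℝ)^j) ≠ 0 := by positivity
    field_simp
    ring
  have e2 : qAux j = K * (2*(x+1) * Real.sqrt x * Real.exp (-(l (2*x)))) := by
    unfold qAux
    rw [Real.sqrt_mul pi_pos.le, hK]
    have h1 : x + 1 ≠ 0 := by linarith
    have h4 : ((4:ℝ)^j) ≠ 0 := by positivity
    field_simp
    ring
  rw [e1, e2]
  exact mul_le_mul_of_nonneg_left (key_ineq x hx) hK0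

lemma one_le_qAux (j : ℕ) (hj : 1 ≤ j) : 1 ≤ qAux j := by
  have mono : ∀ k, j ≤ k → qAux k ≤ qAux j := by
    intro k hk
    induction k, hk using Nat.le_induction with
    | base => exact le_refl _
    | succ n hn ih => exact le_trans (qAux_succ_le n (le_trans hj hn)) ih
  exact le_of_tendsto qAux_tendsto (eventually_atTop.2 ⟨j, fun k hk => mono k hk⟩)

lemma centralBinom_lower (j : ℕ) (hj : 1 ≤ j) :
    4^j * Real.exp (l (2*(j:ℝ))) / Real.sqrt (π*j) ≤ (Nat.centralBinom j : ℝ) := by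
  have hj0 : (0:ℝ) < j := by exact_mod_cast hj
  have hs : (0:ℝ) < Real.sqrt (π*(j:ℝ)) := Real.sqrt_pos.2 (by positivity)
  have h := one_le_qAux j hj
  unfold qAux at h
  rw [le_div_iff₀ (by positivity : (0:ℝ) < 4^j), one_mul] at h
  rw [div_le_iff₀ hs]
  calc 4^j * Real.exp (l (2*(j:ℝ)))
      ≤ ((Nat.centralBinom j : ℝ) * Real.sqrt (π*j) * Real.exp (-(l (2*j)))) * Real.exp (l (2*(j:ℝ))) := by
        apply mul_le_mul_of_nonneg_right h (Real.exp_pos _).le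
    _ = (Nat.centralBinom j : ℝ) * Real.sqrt (π*j) := by
        rw [mul_assoc, ← Real.exp_add]
        simp

end Aux

theorem stmt8 (n : ℕ) (hn : Odd n) (p : ℝ) (hp0 : 0 < p) (hp : p < 1 / 2) :
    binomTail n ((n + 1) / 2) p
      ≥ (1 - 2 * p) * Real.exp (l (n + 1)) * (2 * Real.sqrt (p * (1 - p))) ^ (n - 1)
          * (-Real.log (1 - 4 * (p * (1 - p)))) / Real.sqrt (2 * π * (n + 1)) := by
  obtain ⟨k, hk⟩ := hn
  have hq0 : 0 < 1 - p := by linarith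
  have ha0 : 0 < 1 - 2*p := by linarith
  have hx0 : 0 < p * (1-p) := mul_pos hp0 hq0
  have hm : (n+1)/2 = k+1 := by omega
  have hn1 : n - 1 = 2*k := by omega
  have hnk : n - (k+1) = k := by omega
  have hterm : binomTail n ((n+1)/2) p ≥ (n.choose (k+1) : ℝ) * p^(k+1) * (1-p)^k := by
    rw [hm]
    unfold binomTail
    have hmem : k+1 ∈ Finset.Icc (k+1) n := by
      simp only [Finset.mem_Icc]
      omega
    have h := Finset.single_le_sum (f := fun h => (n.choose h : ℝ) * p^h * (1-p)^(n-h))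
      (fun i _ => by positivity) hmem
    rw [hnk] at h
    exact h
  have hS : (0:ℝ) < Real.sqrt (π*((k:ℝ)+1)) := Real.sqrt_pos.2 (by positivity)
  have hCn : 4^(k+1) * Real.exp (l (2*((k:ℝ)+1))) / (2 * Real.sqrt (π*((k:ℝ)+1)))
      ≤ (n.choose (k+1) : ℝ) := by
    have h1 := centralBinom_lower (k+1) (by omega)
    have h2 : Nat.centralBinom (k+1) = 2 * n.choose (k+1) := by
      unfold Nat.centralBinom
      subst hk
      rw [show 2*(k+1) = (2*k+1)+1 by ring, Nat.choose_succ_succ, Nat.choose_symm_half]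
      ring
    have h3 : ((k+1:ℕ):ℝ) = (k:ℝ)+1 := by push_cast; ring
    rw [h3] at h1
    rw [h2] at h1
    push_cast at h1
    rw [div_le_iff₀ hS] at h1
    rw [div_le_iff₀ (by positivity : (0:ℝ) < 2 * Real.sqrt (π*((k:ℝ)+1)))]
    nlinarith [h1]
  have hsq : Real.sqrt (2*π*((n:ℝ)+1)) = 2 * Real.sqrt (π*((k:ℝ)+1)) := by
    have h : 2*π*((n:ℝ)+1) = 2^2 * (π*((k:ℝ)+1)) := by subst hk; push_cast; ring
    rw [h, Real.sqrt_mul (by norm_num), Real.sqrt_sq (by norm_num)]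
  have hpow : (2 * Real.sqrt (p*(1-p)))^(n-1) = (4*(p*(1-p)))^k := by
    rw [hn1, pow_mul, mul_pow, Real.sq_sqrt hx0.le]
    norm_num
  have hlog : Real.log (1 - 4*(p*(1-p))) = 2 * Real.log (1-2*p) := by
    rw [show 1 - 4*(p*(1-p)) = (1-2*p)^2 by ring, Real.log_pow]
    push_cast; ring
  have hL : ((n:ℝ)+1) = 2*((k:ℝ)+1) := by subst hk; push_cast; ring
  have hkey : (1-2*p) * (-(2*Real.log (1-2*p))) ≤ 4*p := by
    have h1 : Real.log (1-2*p)⁻¹ ≤ (1-2*p)⁻¹ - 1 := Real.log_le_sub_one_of_pos (by positivity)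
    rw [Real.log_inv] at h1
    have h2 : (1-2*p) * (-Real.log (1-2*p)) ≤ (1-2*p) * ((1-2*p)⁻¹ - 1) :=
      mul_le_mul_of_nonneg_left h1 ha0.le
    have h3 : (1-2*p) * ((1-2*p)⁻¹ - 1) = 2*p := by
      field_simp
      ring
    have h4 : (1-2*p) * (-(2*Real.log (1-2*p))) = 2*((1-2*p) * (-Real.log (1-2*p))) := by ring
    linarith
  rw [ge_iff_le, hsq, hpow, hlog, hL]
  calc (1-2*p) * Real.exp (l (2*((k:ℝ)+1))) * (4*(p*(1-p)))^k * (-(2*Real.log (1-2*p)))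
        / (2 * Real.sqrt (π*((k:ℝ)+1)))
      = (Real.exp (l (2*((k:ℝ)+1))) * (4*(p*(1-p)))^k / (2 * Real.sqrt (π*((k:ℝ)+1))))
          * ((1-2*p) * (-(2*Real.log (1-2*p)))) := by ring
    _ ≤ (Real.exp (l (2*((k:ℝ)+1))) * (4*(p*(1-p)))^k / (2 * Real.sqrt (π*((k:ℝ)+1))))
          * (4*p) := by
        apply mul_le_mul_of_nonneg_left hkey
        positivity
    _ = (4^(k+1) * Real.exp (l (2*((k:ℝ)+1))) / (2 * Real.sqrt (π*((k:ℝ)+1))))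
          * (p * (p*(1-p))^k) := by
        rw [mul_pow]
        ring
    _ ≤ (n.choose (k+1) : ℝ) * (p * (p*(1-p))^k) := by
        apply mul_le_mul_of_nonneg_right hCn
        positivity
    _ = (n.choose (k+1) : ℝ) * p^(k+1) * (1-p)^k := by
        rw [mul_pow, pow_succ]
        ring
    _ ≤ binomTail n ((n+1)/2) p := hterm
end
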